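/- Let T = convexHull{(0,0), (2,0), (0,1)} ⊆ ℝ² (a right triangle with side lengths 1, 2, √5). Define the five triangles T₁ = convexHull{(0,0), (1,0), (1/5, 2/5)}, T₂ = convexHull{(1/5, 2/5), (1,0), (2/5, 4/5)}, T₃ = convexHull{(2/5, 4/5), (1,0), (6/5, 2/5)}, T₄ = convexHull{(0,0), (0,1), (2/5, 4/5)}, and T₅ = convexHull{(1,0), (2,0), (6/5, 2/5)}. Then: (i) T = T₁ ∪ T₂ ∪ T₃ ∪ T₄ ∪ T₅; (ii) the interiors of T₁, …, T₅ are pairwise disjoint; and (iii) for each i = 1, …, 5 there exists a map fᵢ : ℝ² → ℝ² satisfying dist(fᵢ(x), fᵢ(y)) = dist(x,y)/√5 for all x, y ∈ ℝ² and fᵢ(T) = Tᵢ. In particular, the 1 : 2 : √5 right triangle can be partitioned into five right triangles with the same proportions. -/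

import Mathlib

set_option maxHeartbeats 1000000
set_option linter.unreachableTactic false
set_option linter.unusedTactic false


/-- A point of the Euclidean plane given by its two coordinates. -/
noncomputable def pt (a b : ℝ) : EuclideanSpace ℝ (Fin 2) := WithLp.toLp 2 ![a, b]

/-- The `1 : 2 : √5` right triangle `T = convexHull {(0,0), (2,0), (0,1)}`. -/
noncomputable def Tri : Set (EuclideanSpace ℝ (Fin 2)) :=
  convexHull ℝ {pt 0 0, pt 2 0, pt 0 1}

/-- The five sub-triangles `T₁, …, T₅` of the pinwheel subdivision of `T`. -/
noncomputable def Tsub : Fin 5 → Set (EuclideanSpace ℝ (Fin 2)) :=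
  ![convexHull ℝ {pt 0 0, pt 1 0, pt (1/5) (2/5)},
    convexHull ℝ {pt (1/5) (2/5), pt 1 0, pt (2/5) (4/5)},
    convexHull ℝ {pt (2/5) (4/5), pt 1 0, pt (6/5) (2/5)},
    convexHull ℝ {pt 0 0, pt 0 1, pt (2/5) (4/5)},
    convexHull ℝ {pt 1 0, pt 2 0, pt (6/5) (2/5)}]

abbrev E2 := EuclideanSpace ℝ (Fin 2)

def lf (a b : ℝ) : E2 → ℝ := fun x => a * x 0 + b * x 1

lemma lf_lin (a b : ℝ) : IsLinearMap ℝ (lf a b) :=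
  ⟨fun x y => by simp [lf]; ring, fun c x => by simp [lf]; ring⟩

lemma lf_pt (a b u v : ℝ) : lf a b (pt u v) = a * u + b * v := by
  simp [lf, pt]

lemma mem_hull3 {p q r x : E2} {a b c : ℝ} (ha : 0 ≤ a) (hb : 0 ≤ b) (hc : 0 ≤ c)
    (hsum : a + b + c = 1) (hx : a • p + b • q + c • r = x) :
    x ∈ convexHull ℝ ({p, q, r} : Set E2) := by
  rw [← hx, show a • p + b • q + c • r = Finset.univ.centerMass ![a,b,c] ![p,q,r] by
    rw [Finset.centerMass, show ∑ i, ![a,b,c] i = 1 by simp [Fin.sum_univ_three, hsum],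
      inv_one, one_smul, Fin.sum_univ_three]; rfl]
  exact Finset.centerMass_mem_convexHull _ (fun i _ => by fin_cases i <;> simpa)
    (by simp [Fin.sum_univ_three, hsum])
    (fun i _ => by fin_cases i <;> simp [Set.mem_insert_iff])

lemma hull3_iff (p q r x : E2) :
    x ∈ convexHull ℝ ({p, q, r} : Set E2) ↔
      ∃ a b c : ℝ, 0 ≤ a ∧ 0 ≤ b ∧ 0 ≤ c ∧ a + b + c = 1 ∧ a • p + b • q + c • r = x := by
  constructor
  · intro hx
    rw [show ({p, q, r} : Set E2) = insert p {q, r} from rfl,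
      convexHull_insert ⟨q, Set.mem_insert q {r}⟩] at hx
    rw [mem_convexJoin] at hx
    obtain ⟨p', hp', z, hz, hxz⟩ := hx
    rw [Set.mem_singleton_iff] at hp'
    subst hp'
    rw [convexHull_pair] at hz
    obtain ⟨s, t, hs, ht, hst, rfl⟩ := hz
    obtain ⟨u, w, hu, hw, huw, rfl⟩ := hxz
    refine ⟨u, w * s, w * t, hu, by positivity, by positivity, by nlinarith, ?_⟩
    rw [smul_add, smul_smul, smul_smul, add_assoc]
  · rintro ⟨a, b, c, ha, hb, hc, hsum, hx⟩
    exact mem_hull3 ha hb hc hsum hx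

lemma mem_hull3_pt {p0 p1 q0 q1 r0 r1 : ℝ} {x : E2} (a b c : ℝ)
    (ha : 0 ≤ a) (hb : 0 ≤ b) (hc : 0 ≤ c) (hsum : a + b + c = 1)
    (h0 : a * p0 + b * q0 + c * r0 = x 0) (h1 : a * p1 + b * q1 + c * r1 = x 1) :
    x ∈ convexHull ℝ ({pt p0 p1, pt q0 q1, pt r0 r1} : Set E2) := by
  refine mem_hull3 ha hb hc hsum ?_
  ext i
  fin_cases i <;> simp [pt] <;> linarith [h0, h1]

lemma Tri_coord {x : E2} (hx : x ∈ Tri) : 0 ≤ x 0 ∧ 0 ≤ x 1 ∧ x 0 + 2 * x 1 ≤ 2 := by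
  rw [Tri, hull3_iff] at hx
  obtain ⟨a, b, c, ha, hb, hc, hsum, hx⟩ := hx
  have h0 := congrFun (congrArg WithLp.ofLp hx) 0
  have h1 := congrFun (congrArg WithLp.ofLp hx) 1
  simp [pt] at h0 h1
  refine ⟨by linarith, by linarith, by linarith⟩

lemma hull3_le {p0 p1 q0 q1 r0 r1 : ℝ} (a b k : ℝ)
    (hp : a * p0 + b * p1 ≤ k) (hq : a * q0 + b * q1 ≤ k) (hr : a * r0 + b * r1 ≤ k) :
    convexHull ℝ ({pt p0 p1, pt q0 q1, pt r0 r1} : Set E2) ⊆ {x | lf a b x ≤ k} := by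
  apply convexHull_min ?_ (convex_halfSpace_le (lf_lin a b) k)
  rintro z (rfl | rfl | rfl) <;> simpa [lf_pt]

lemma hull3_ge {p0 p1 q0 q1 r0 r1 : ℝ} (a b k : ℝ)
    (hp : k ≤ a * p0 + b * p1) (hq : k ≤ a * q0 + b * q1) (hr : k ≤ a * r0 + b * r1) :
    convexHull ℝ ({pt p0 p1, pt q0 q1, pt r0 r1} : Set E2) ⊆ {x | k ≤ lf a b x} := by
  apply convexHull_min ?_ (convex_halfSpace_ge (lf_lin a b) k)
  rintro z (rfl | rfl | rfl) <;> simpa [lf_pt]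

lemma disj_of_sep {S T : Set E2} (a b k : ℝ) (w : E2) (hw : 0 < lf a b w)
    (hS : S ⊆ {x | lf a b x ≤ k}) (hT : T ⊆ {x | k ≤ lf a b x}) :
    Disjoint (interior S) (interior T) := by
  rw [Set.disjoint_left]
  intro x hxS hxT
  obtain ⟨ε, hε, hball⟩ := Metric.isOpen_iff.1 isOpen_interior x hxS
  have hwn : w ≠ 0 := by
    rintro rfl
    simp [lf] at hw
  have hw0 : (0:ℝ) < ‖w‖ := norm_pos_iff.2 hwn
  set t : ℝ := ε / (2 * ‖w‖) with ht
  have htpos : 0 < t := by positivity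
  have hmem : x + t • w ∈ S := by
    apply interior_subset
    apply hball
    rw [Metric.mem_ball, dist_eq_norm, add_sub_cancel_left, norm_smul, Real.norm_eq_abs,
      abs_of_pos htpos]
    have : t * ‖w‖ = ε / 2 := by
      rw [ht]; field_simp
    linarith
  have h1 : lf a b (x + t • w) ≤ k := hS hmem
  have h2 : k ≤ lf a b x := hT (interior_subset hxT)
  have hlin : lf a b (x + t • w) = lf a b x + t * lf a b w := by
    simp [lf]; ring
  nlinarith [mul_pos htpos hw]

noncomputable def aff (m00 m01 m10 m11 c0 c1 : ℝ) : E2 →ᵃ[ℝ] E2 where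
  toFun := fun x => pt (m00 * x 0 + m01 * x 1 + c0) (m10 * x 0 + m11 * x 1 + c1)
  linear :=
    { toFun := fun x => pt (m00 * x 0 + m01 * x 1) (m10 * x 0 + m11 * x 1)
      map_add' := fun x y => by ext i; fin_cases i <;> simp [pt] <;> ring
      map_smul' := fun c x => by ext i; fin_cases i <;> simp [pt] <;> ring }
  map_vadd' := fun p v => by ext i; fin_cases i <;> simp [pt] <;> ring

lemma aff_pt (m00 m01 m10 m11 c0 c1 u v : ℝ) :
    aff m00 m01 m10 m11 c0 c1 (pt u v)
      = pt (m00 * u + m01 * v + c0) (m10 * u + m11 * v + c1) := by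
  ext i; fin_cases i <;> simp [aff, pt]

lemma aff_dist (m00 m01 m10 m11 c0 c1 : ℝ)
    (h1 : m00 ^ 2 + m10 ^ 2 = 1 / 5) (h2 : m01 ^ 2 + m11 ^ 2 = 1 / 5)
    (h3 : m00 * m01 + m10 * m11 = 0) (x y : E2) :
    dist (aff m00 m01 m10 m11 c0 c1 x) (aff m00 m01 m10 m11 c0 c1 y)
      = dist x y / Real.sqrt 5 := by
  rw [EuclideanSpace.dist_eq, EuclideanSpace.dist_eq, Fin.sum_univ_two, Fin.sum_univ_two]
  simp only [aff, AffineMap.coe_mk, pt, PiLp.toLp_apply, Real.dist_eq, sq_abs, Matrix.cons_val_zero,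
    Matrix.cons_val_one, Matrix.head_cons]
  have key : (m00 * x 0 + m01 * x 1 + c0 - (m00 * y 0 + m01 * y 1 + c0)) ^ 2
      + (m10 * x 0 + m11 * x 1 + c1 - (m10 * y 0 + m11 * y 1 + c1)) ^ 2
      = ((x 0 - y 0) ^ 2 + (x 1 - y 1) ^ 2) / 5 := by
    linear_combination (x 0 - y 0) ^ 2 * h1 + (x 1 - y 1) ^ 2 * h2
      + 2 * (x 0 - y 0) * (x 1 - y 1) * h3
  rw [key, Real.sqrt_div (by positivity)]

lemma mem_Tri (u v : ℝ) (hu : 0 ≤ u) (hv : 0 ≤ v) (h : u + 2 * v ≤ 2) : pt u v ∈ Tri := by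
  rw [Tri]
  exact mem_hull3_pt (1 - u / 2 - v) (u / 2) v (by linarith) (by linarith) hv (by ring)
    (by simp only [pt, PiLp.toLp_apply, Matrix.cons_val_zero]; ring)
    (by simp only [pt, PiLp.toLp_apply, Matrix.cons_val_one, Matrix.head_cons, Matrix.cons_val_zero]; ring)

/-- The `1 : 2 : √5` right triangle `T` is partitioned into the five
triangles `T₁, …, T₅`: (i) `T` is their union; (ii) their interiors are pairwise
disjoint; (iii) each `Tᵢ` is the image of `T` under a similarity with ratio `1/√5`. -/
theorem stmt11 :
    (Tri = ⋃ i, Tsub i) ∧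
    (Pairwise fun i j => Disjoint (interior (Tsub i)) (interior (Tsub j))) ∧
    (∀ i : Fin 5, ∃ f : EuclideanSpace ℝ (Fin 2) → EuclideanSpace ℝ (Fin 2),
      (∀ x y, dist (f x) (f y) = dist x y / Real.sqrt 5) ∧ f '' Tri = Tsub i) := by
  refine ⟨?_, ?_, ?_⟩
  · apply Set.Subset.antisymm
    · intro x hx
      obtain ⟨h0, h1, h2⟩ := Tri_coord hx
      rw [Set.mem_iUnion]
      rcases le_or_gt (x 1) (2 * x 0) with h3 | h3
      · rcases le_or_gt (x 0 + 2 * x 1) 1 with h4 | h4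
        · refine ⟨0, ?_⟩
          show x ∈ convexHull ℝ {pt 0 0, pt 1 0, pt (1/5) (2/5)}
          exact mem_hull3_pt (1 - x 0 - 2 * x 1) (x 0 - x 1 / 2) (5 * x 1 / 2)
            (by linarith) (by linarith) (by linarith) (by ring) (by ring) (by ring)
        · rcases le_or_gt (4 * x 0 + 3 * x 1) 4 with h5 | h5
          · refine ⟨1, ?_⟩
            show x ∈ convexHull ℝ {pt (1/5) (2/5), pt 1 0, pt (2/5) (4/5)}
            exact mem_hull3_pt (2 - 2 * x 0 - 3 * x 1 / 2) (x 0 - x 1 / 2) (x 0 + 2 * x 1 - 1)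
              (by linarith) (by linarith) (by linarith) (by ring) (by ring) (by ring)
          · rcases le_or_gt (x 0) (1 + x 1 / 2) with h6 | h6
            · refine ⟨2, ?_⟩
              show x ∈ convexHull ℝ {pt (2/5) (4/5), pt 1 0, pt (6/5) (2/5)}
              exact mem_hull3_pt (1 - x 0 + x 1 / 2) (2 - x 0 - 2 * x 1)
                (2 * x 0 + 3 * x 1 / 2 - 2)
                (by linarith) (by linarith) (by linarith) (by ring) (by ring) (by ring)
            · refine ⟨4, ?_⟩
              show x ∈ convexHull ℝ {pt 1 0, pt 2 0, pt (6/5) (2/5)}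
              exact mem_hull3_pt (2 - x 0 - 2 * x 1) (x 0 - x 1 / 2 - 1) (5 * x 1 / 2)
                (by linarith) (by linarith) (by linarith) (by ring) (by ring) (by ring)
      · refine ⟨3, ?_⟩
        show x ∈ convexHull ℝ {pt 0 0, pt 0 1, pt (2/5) (4/5)}
        exact mem_hull3_pt (1 - x 1 - x 0 / 2) (x 1 - 2 * x 0) (5 * x 0 / 2)
          (by linarith) (by linarith) (by linarith) (by ring) (by ring) (by ring)
    · apply Set.iUnion_subset
      intro i
      fin_cases i <;>
        refine convexHull_min ?_ (convex_convexHull ℝ _) <;>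
        rintro z (rfl | rfl | rfl) <;>
        apply mem_Tri <;> norm_num
  · have d01 : Disjoint (interior (convexHull ℝ ({pt 0 0, pt 1 0, pt (1/5) (2/5)} : Set E2)))
        (interior (convexHull ℝ ({pt (1/5) (2/5), pt 1 0, pt (2/5) (4/5)} : Set E2))) :=
      disj_of_sep 1 2 1 (pt 1 2) (by norm_num [lf_pt])
        (hull3_le _ _ _ (by norm_num) (by norm_num) (by norm_num))
        (hull3_ge _ _ _ (by norm_num) (by norm_num) (by norm_num))
    have d02 : Disjoint (interior (convexHull ℝ ({pt 0 0, pt 1 0, pt (1/5) (2/5)} : Set E2)))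
        (interior (convexHull ℝ ({pt (2/5) (4/5), pt 1 0, pt (6/5) (2/5)} : Set E2))) :=
      disj_of_sep 1 2 1 (pt 1 2) (by norm_num [lf_pt])
        (hull3_le _ _ _ (by norm_num) (by norm_num) (by norm_num))
        (hull3_ge _ _ _ (by norm_num) (by norm_num) (by norm_num))
    have d03 : Disjoint (interior (convexHull ℝ ({pt 0 0, pt 1 0, pt (1/5) (2/5)} : Set E2)))
        (interior (convexHull ℝ ({pt 0 0, pt 0 1, pt (2/5) (4/5)} : Set E2))) :=
      disj_of_sep (-2) 1 0 (pt (-2) 1) (by norm_num [lf_pt])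
        (hull3_le _ _ _ (by norm_num) (by norm_num) (by norm_num))
        (hull3_ge _ _ _ (by norm_num) (by norm_num) (by norm_num))
    have d04 : Disjoint (interior (convexHull ℝ ({pt 0 0, pt 1 0, pt (1/5) (2/5)} : Set E2)))
        (interior (convexHull ℝ ({pt 1 0, pt 2 0, pt (6/5) (2/5)} : Set E2))) :=
      disj_of_sep 1 0 1 (pt 1 0) (by norm_num [lf_pt])
        (hull3_le _ _ _ (by norm_num) (by norm_num) (by norm_num))
        (hull3_ge _ _ _ (by norm_num) (by norm_num) (by norm_num))
    have d12 : Disjoint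
        (interior (convexHull ℝ ({pt (1/5) (2/5), pt 1 0, pt (2/5) (4/5)} : Set E2)))
        (interior (convexHull ℝ ({pt (2/5) (4/5), pt 1 0, pt (6/5) (2/5)} : Set E2))) :=
      disj_of_sep 4 3 4 (pt 4 3) (by norm_num [lf_pt])
        (hull3_le _ _ _ (by norm_num) (by norm_num) (by norm_num))
        (hull3_ge _ _ _ (by norm_num) (by norm_num) (by norm_num))
    have d13 : Disjoint
        (interior (convexHull ℝ ({pt (1/5) (2/5), pt 1 0, pt (2/5) (4/5)} : Set E2)))
        (interior (convexHull ℝ ({pt 0 0, pt 0 1, pt (2/5) (4/5)} : Set E2))) :=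
      disj_of_sep (-2) 1 0 (pt (-2) 1) (by norm_num [lf_pt])
        (hull3_le _ _ _ (by norm_num) (by norm_num) (by norm_num))
        (hull3_ge _ _ _ (by norm_num) (by norm_num) (by norm_num))
    have d14 : Disjoint
        (interior (convexHull ℝ ({pt (1/5) (2/5), pt 1 0, pt (2/5) (4/5)} : Set E2)))
        (interior (convexHull ℝ ({pt 1 0, pt 2 0, pt (6/5) (2/5)} : Set E2))) :=
      disj_of_sep 1 0 1 (pt 1 0) (by norm_num [lf_pt])
        (hull3_le _ _ _ (by norm_num) (by norm_num) (by norm_num))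
        (hull3_ge _ _ _ (by norm_num) (by norm_num) (by norm_num))
    have d23 : Disjoint
        (interior (convexHull ℝ ({pt (2/5) (4/5), pt 1 0, pt (6/5) (2/5)} : Set E2)))
        (interior (convexHull ℝ ({pt 0 0, pt 0 1, pt (2/5) (4/5)} : Set E2))) :=
      disj_of_sep (-2) 1 0 (pt (-2) 1) (by norm_num [lf_pt])
        (hull3_le _ _ _ (by norm_num) (by norm_num) (by norm_num))
        (hull3_ge _ _ _ (by norm_num) (by norm_num) (by norm_num))
    have d24 : Disjoint
        (interior (convexHull ℝ ({pt (2/5) (4/5), pt 1 0, pt (6/5) (2/5)} : Set E2)))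
        (interior (convexHull ℝ ({pt 1 0, pt 2 0, pt (6/5) (2/5)} : Set E2))) :=
      disj_of_sep 2 (-1) 2 (pt 2 (-1)) (by norm_num [lf_pt])
        (hull3_le _ _ _ (by norm_num) (by norm_num) (by norm_num))
        (hull3_ge _ _ _ (by norm_num) (by norm_num) (by norm_num))
    have d34 : Disjoint (interior (convexHull ℝ ({pt 0 0, pt 0 1, pt (2/5) (4/5)} : Set E2)))
        (interior (convexHull ℝ ({pt 1 0, pt 2 0, pt (6/5) (2/5)} : Set E2))) :=
      disj_of_sep 1 0 (1/2) (pt 1 0) (by norm_num [lf_pt])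
        (hull3_le _ _ _ (by norm_num) (by norm_num) (by norm_num))
        (hull3_ge _ _ _ (by norm_num) (by norm_num) (by norm_num))
    intro i j hij
    fin_cases i <;> fin_cases j
    exacts [absurd rfl hij, d01, d02, d03, d04,
      d01.symm, absurd rfl hij, d12, d13, d14,
      d02.symm, d12.symm, absurd rfl hij, d23, d24,
      d03.symm, d13.symm, d23.symm, absurd rfl hij, d34,
      d04.symm, d14.symm, d24.symm, d34.symm, absurd rfl hij]
  · intro i
    fin_cases i
    · refine ⟨aff (2/5) (-1/5) (-1/5) (-2/5) (1/5) (2/5),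
        fun x y => aff_dist _ _ _ _ _ _ (by norm_num) (by norm_num) (by norm_num) x y, ?_⟩
      show _ '' Tri = convexHull ℝ {pt 0 0, pt 1 0, pt (1/5) (2/5)}
      rw [Tri, AffineMap.image_convexHull]
      congr 1
      rw [Set.image_insert_eq, Set.image_insert_eq, Set.image_singleton,
        aff_pt, aff_pt, aff_pt]
      norm_num
      all_goals
        ext w
        simp only [Set.mem_insert_iff, Set.mem_singleton_iff]
        tauto
    · refine ⟨aff (2/5) (1/5) (-1/5) (2/5) (1/5) (2/5),
        fun x y => aff_dist _ _ _ _ _ _ (by norm_num) (by norm_num) (by norm_num) x y, ?_⟩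
      show _ '' Tri = convexHull ℝ {pt (1/5) (2/5), pt 1 0, pt (2/5) (4/5)}
      rw [Tri, AffineMap.image_convexHull]
      congr 1
      rw [Set.image_insert_eq, Set.image_insert_eq, Set.image_singleton,
        aff_pt, aff_pt, aff_pt]
      norm_num
      all_goals
        ext w
        simp only [Set.mem_insert_iff, Set.mem_singleton_iff]
        tauto
    · refine ⟨aff (-2/5) (-1/5) (1/5) (-2/5) (6/5) (2/5),
        fun x y => aff_dist _ _ _ _ _ _ (by norm_num) (by norm_num) (by norm_num) x y, ?_⟩
      show _ '' Tri = convexHull ℝ {pt (2/5) (4/5), pt 1 0, pt (6/5) (2/5)}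
      rw [Tri, AffineMap.image_convexHull]
      congr 1
      rw [Set.image_insert_eq, Set.image_insert_eq, Set.image_singleton,
        aff_pt, aff_pt, aff_pt]
      norm_num
      all_goals
        ext w
        simp only [Set.mem_insert_iff, Set.mem_singleton_iff]
        tauto
    · refine ⟨aff (-1/5) (-2/5) (-2/5) (1/5) (2/5) (4/5),
        fun x y => aff_dist _ _ _ _ _ _ (by norm_num) (by norm_num) (by norm_num) x y, ?_⟩
      show _ '' Tri = convexHull ℝ {pt 0 0, pt 0 1, pt (2/5) (4/5)}
      rw [Tri, AffineMap.image_convexHull]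
      congr 1
      rw [Set.image_insert_eq, Set.image_insert_eq, Set.image_singleton,
        aff_pt, aff_pt, aff_pt]
      norm_num
      all_goals
        ext w
        simp only [Set.mem_insert_iff, Set.mem_singleton_iff]
        tauto
    · refine ⟨aff (2/5) (-1/5) (-1/5) (-2/5) (6/5) (2/5),
        fun x y => aff_dist _ _ _ _ _ _ (by norm_num) (by norm_num) (by norm_num) x y, ?_⟩
      show _ '' Tri = convexHull ℝ {pt 1 0, pt 2 0, pt (6/5) (2/5)}
      rw [Tri, AffineMap.image_convexHull]
      congr 1
      rw [Set.image_insert_eq, Set.image_insert_eq, Set.image_singleton,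
        aff_pt, aff_pt, aff_pt]
      norm_num
      all_goals
        ext w
        simp only [Set.mem_insert_iff, Set.mem_singleton_iff]
        tauto
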